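/- Let k ≥ 2 and n ≥ 1 be integers, let Ω be a query-degree distribution on {1,…,k} with query difficulty d̄ = Σ_{d=1}^k d·Ω_d, and let A be the random n×k sampling matrix over ZMod 2 with i.i.d. query rows drawn from Ω. Let x be uniformly distributed on (ZMod 2)^k, independent of A. Then: (1) for each fixed column index j ∈ {1,…,k}, the probability that the j-th column of A is the zero vector equals (1 − d̄/k)^n; and (2) for every estimator f mapping a pair (an n×k matrix over ZMod 2, a vector in (ZMod 2)^n) to a vector in (ZMod 2)^k, the error probability satisfies Pr( f(A, A·x) ≠ x ) ≥ (1/2)·(1 − d̄/k)^n. -/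

import Mathlib

open Finset MeasureTheory
open scoped ENNReal

instance : MeasurableSpace (ZMod 2) := ⊤
instance : MeasurableSingletonClass (ZMod 2) := ⟨fun _ => trivial⟩

/-- The probability weight of a row `v`: a row is the indicator vector of a uniformly random
`d`-element subset of the `k` coordinates, with `d` drawn according to `Ω`. -/
noncomputable def rowWeight (k : ℕ) (Ω : ℕ → ℝ) (v : Fin k → ZMod 2) : ℝ :=
  if hammingNorm v = 0 then 0 else Ω (hammingNorm v) / (Nat.choose k (hammingNorm v) : ℝ)

/-- The distribution of a single random query row in `(ZMod 2)^k`. -/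
noncomputable def rowMeasure (k : ℕ) (Ω : ℕ → ℝ) : Measure (Fin k → ZMod 2) :=
  ∑ v : Fin k → ZMod 2, ENNReal.ofReal (rowWeight k Ω v) • Measure.dirac v

/-- The distribution of the random `n × k` sampling matrix with i.i.d. rows. -/
noncomputable def matrixMeasure (k n : ℕ) (Ω : ℕ → ℝ) :
    Measure (Fin n → Fin k → ZMod 2) :=
  Measure.pi fun _ : Fin n => rowMeasure k Ω



open scoped Classical in
lemma rowMeasure_apply (k : ℕ) (Ω : ℕ → ℝ) (S : Set (Fin k → ZMod 2)) :
    rowMeasure k Ω S = ∑ v ∈ univ.filter (· ∈ S), ENNReal.ofReal (rowWeight k Ω v) := by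
  rw [rowMeasure, Measure.finset_sum_apply, Finset.sum_filter]
  refine Finset.sum_congr rfl fun v _ => ?_
  simp only [Measure.smul_apply, Measure.dirac_apply, Set.indicator_apply, smul_eq_mul]
  by_cases h : v ∈ S <;> simp [h]

instance (k : ℕ) (Ω : ℕ → ℝ) : IsFiniteMeasure (rowMeasure k Ω) := by
  classical
  constructor
  rw [rowMeasure_apply]
  exact ENNReal.sum_lt_top.mpr fun _ _ => ENNReal.ofReal_lt_top

lemma zmod2_eq_one {a : ZMod 2} (h : a ≠ 0) : a = 1 := by revert h; revert a; decide

lemma count_norm (k d : ℕ) (s : Finset (Fin k)) :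
    (univ.filter fun v : Fin k → ZMod 2 => hammingNorm v = d ∧ ∀ i ∉ s, v i = 0).card
      = s.card.choose d := by
  classical
  rw [← Finset.card_powersetCard]
  refine Finset.card_nbij' (fun v => univ.filter fun i => v i ≠ 0)
      (fun t => fun i => if i ∈ t then (1 : ZMod 2) else 0) ?_ ?_ ?_ ?_
  · intro v hv
    simp only [mem_coe, mem_filter, mem_univ, true_and] at hv
    rw [Finset.mem_coe, Finset.mem_powersetCard]
    refine ⟨fun i hi => ?_, hv.1⟩
    simp only [mem_filter, mem_univ, true_and] at hi
    by_contra his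
    exact hi (hv.2 i his)
  · intro t ht
    rw [Finset.mem_coe, Finset.mem_powersetCard] at ht
    simp only [mem_coe, mem_filter, mem_univ, true_and]
    have hsupp : (univ.filter fun i => (if i ∈ t then (1:ZMod 2) else 0) ≠ 0) = t := by
      ext i; by_cases h : i ∈ t <;> simp [h]
    constructor
    · simpa [hammingNorm, hsupp] using ht.2
    · intro i his
      rw [if_neg fun h => his (ht.1 h)]
  · intro v _
    funext i
    by_cases h : v i = 0
    · simp [h]
    · simp [h, zmod2_eq_one h]
  · intro t _
    ext i; by_cases h : i ∈ t <;> simp [h]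

lemma hammingNorm_le (k : ℕ) (v : Fin k → ZMod 2) : hammingNorm v ≤ k := by
  simpa using hammingNorm_le_card_fintype (x := v)

lemma rowWeight_nonneg (k : ℕ) (Ω : ℕ → ℝ) (hΩ0 : ∀ d ∈ Finset.Icc 1 k, 0 ≤ Ω d)
    (v : Fin k → ZMod 2) : 0 ≤ rowWeight k Ω v := by
  rw [rowWeight]
  split
  · exact le_refl _
  · next h =>
    exact div_nonneg (hΩ0 _ (Finset.mem_Icc.mpr ⟨Nat.one_le_iff_ne_zero.mpr h, hammingNorm_le k v⟩))
      (Nat.cast_nonneg _)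

lemma choose_identity {k d : ℕ} (hk : 1 ≤ k) :
    k * (k-1).choose d = k.choose d * (k - d) := by
  have h1 : Nat.succ (k-1) * (k-1).choose d = k.choose (d+1) * (d+1) := by
    rw [Nat.succ_eq_add_one, Nat.add_one_mul_choose_eq]
    congr 2 <;> omega
  have h2 : k.choose (d+1) * (d+1) = k.choose d * (k - d) := Nat.choose_succ_right_eq k d
  have h3 : Nat.succ (k-1) = k := by omega
  rw [h3] at h1
  omega

lemma choose_ratio {k d : ℕ} (hk : 1 ≤ k) (hdk : d ≤ k) :
    ((k-1).choose d : ℝ) / (k.choose d : ℝ) = ((k:ℝ) - d) / k := by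
  have hpos : 0 < (k.choose d : ℝ) := by exact_mod_cast Nat.choose_pos hdk
  have hkpos : 0 < (k:ℝ) := by exact_mod_cast hk
  have h := choose_identity (d := d) hk
  have hr : (k:ℝ) * ((k-1).choose d : ℝ) = (k.choose d : ℝ) * ((k:ℝ) - (d:ℝ)) := by
    have h' := congrArg (Nat.cast : ℕ → ℝ) h
    push_cast [Nat.cast_sub hdk] at h'
    linarith
  field_simp
  linarith

lemma count_norm' (k d : ℕ) (j : Fin k) :
    (univ.filter fun v : Fin k → ZMod 2 => v j = 0 ∧ hammingNorm v = d).card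
      = (k-1).choose d := by
  classical
  have := count_norm k d (univ.erase j)
  rw [Finset.card_erase_of_mem (Finset.mem_univ j), Finset.card_univ, Fintype.card_fin] at this
  rw [← this]
  congr 1
  apply Finset.filter_congr
  intro v _
  constructor
  · rintro ⟨h1, h2⟩
    refine ⟨h2, fun i hi => ?_⟩
    have : i = j := by simpa [Finset.mem_erase] using hi
    rwa [this]
  · rintro ⟨h2, h1⟩
    exact ⟨h1 j (by simp [Finset.mem_erase]), h2⟩

lemma col_sum (k : ℕ) (hk : 1 ≤ k) (Ω : ℕ → ℝ) (j : Fin k) :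
    ∑ v ∈ univ.filter (fun v : Fin k → ZMod 2 => v j = 0), rowWeight k Ω v
      = ∑ d ∈ Icc 1 k, ((k:ℝ) - d) / k * Ω d := by
  classical
  rw [← Finset.sum_fiberwise_of_maps_to (g := hammingNorm) (t := Finset.range (k+1))
      (fun v _ => Finset.mem_range.mpr (Nat.lt_succ_of_le (hammingNorm_le k v)))]
  rw [← Finset.sum_subset (show Finset.Icc 1 k ⊆ Finset.range (k+1) by
        intro d hd; rw [Finset.mem_range]; exact Nat.lt_succ_of_le (Finset.mem_Icc.mp hd).2)
      ?vanish]
  case vanish =>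
    intro d hd hd'
    have hd0 : d = 0 := by
      rw [Finset.mem_range] at hd; rw [Finset.mem_Icc] at hd'; omega
    apply Finset.sum_eq_zero
    intro v hv
    rw [Finset.mem_filter] at hv
    rw [rowWeight, if_pos (hv.2.trans hd0)]
  refine Finset.sum_congr rfl fun d hd => ?_
  rw [Finset.mem_Icc] at hd
  have hconst : ∀ v ∈ (univ.filter (fun v : Fin k → ZMod 2 => v j = 0)).filter
      (fun v => hammingNorm v = d), rowWeight k Ω v = Ω d / (k.choose d : ℝ) := by
    intro v hv
    simp only [Finset.mem_filter] at hv
    rw [rowWeight, hv.2, if_neg (by omega)]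
  rw [Finset.sum_congr rfl hconst, Finset.sum_const, Finset.filter_filter, count_norm' k d j,
    nsmul_eq_mul]
  rw [show ((k-1).choose d : ℝ) * (Ω d / (k.choose d : ℝ))
      = Ω d * (((k-1).choose d : ℝ) / (k.choose d : ℝ)) by ring, choose_ratio hk hd.2]
  ring

theorem stmt15 (k n : ℕ) (hk : 2 ≤ k) (hn : 1 ≤ n)
    (Ω : ℕ → ℝ) (hΩ0 : ∀ d ∈ Finset.Icc 1 k, 0 ≤ Ω d)
    (hΩ1 : ∑ d ∈ Finset.Icc 1 k, Ω d = 1)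
    (dbar : ℝ) (hdbar : dbar = ∑ d ∈ Finset.Icc 1 k, (d : ℝ) * Ω d) :
    -- (1) for each column index `j`, the probability that the `j`-th column of `A` is zero
    -- equals `(1 − d̄/k)^n`
    (∀ j : Fin k,
      matrixMeasure k n Ω {A : Fin n → Fin k → ZMod 2 | ∀ i, A i j = 0} =
        ENNReal.ofReal ((1 - dbar / k) ^ n)) ∧
    -- (2) for every estimator `f`, `Pr(f(A, A·x) ≠ x) ≥ (1/2)·(1 − d̄/k)^n` where `x` is
    -- uniform on `(ZMod 2)^k`, independent of `A`
    (∀ f : (Fin n → Fin k → ZMod 2) → (Fin n → ZMod 2) → (Fin k → ZMod 2),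
      ENNReal.ofReal ((1 / 2) * (1 - dbar / k) ^ n) ≤
        ((matrixMeasure k n Ω).prod (PMF.uniformOfFintype (Fin k → ZMod 2)).toMeasure)
          {p : (Fin n → Fin k → ZMod 2) × (Fin k → ZMod 2) |
            f p.1 (fun i => ∑ j, p.1 i j * p.2 j) ≠ p.2}) := by
  classical
  have hk0 : (0:ℝ) < k := by exact_mod_cast (by omega : 0 < k)
  have hdbar_le : dbar ≤ k := by
    rw [hdbar]
    calc ∑ d ∈ Finset.Icc 1 k, (d:ℝ) * Ω d ≤ ∑ d ∈ Finset.Icc 1 k, (k:ℝ) * Ω d := by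
          apply Finset.sum_le_sum
          intro d hd
          have h1 := hΩ0 d hd
          have hdk : (d:ℝ) ≤ k := by exact_mod_cast (Finset.mem_Icc.mp hd).2
          nlinarith
      _ = k := by rw [← Finset.mul_sum, hΩ1, mul_one]
  have h01 : 0 ≤ 1 - dbar / k := by
    have : dbar / k ≤ 1 := by rw [div_le_one hk0]; exact hdbar_le
    linarith
  have hrow : ∀ j : Fin k, rowMeasure k Ω {v : Fin k → ZMod 2 | v j = 0}
      = ENNReal.ofReal (1 - dbar / k) := by
    intro j
    rw [rowMeasure_apply]
    rw [← ENNReal.ofReal_sum_of_nonneg (fun v _ => rowWeight_nonneg k Ω hΩ0 v)]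
    congr 1
    refine Eq.trans (Finset.sum_congr (show _ = univ.filter (fun v : Fin k → ZMod 2 => v j = 0)
        from by ext v; simp) (fun _ _ => rfl)) ?_
    rw [col_sum k (by omega) Ω j]
    have hexp : ∑ d ∈ Finset.Icc 1 k, ((k:ℝ) - d) / k * Ω d
        = ∑ d ∈ Finset.Icc 1 k, (Ω d - (d:ℝ) * Ω d / k) := by
      apply Finset.sum_congr rfl
      intro d hd
      field_simp
    rw [hexp, Finset.sum_sub_distrib, hΩ1, ← Finset.sum_div, hdbar]
  have part1 : ∀ j : Fin k,
      matrixMeasure k n Ω {A : Fin n → Fin k → ZMod 2 | ∀ i, A i j = 0} =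
        ENNReal.ofReal ((1 - dbar / k) ^ n) := by
    intro j
    have hset : {A : Fin n → Fin k → ZMod 2 | ∀ i, A i j = 0}
        = Set.pi Set.univ (fun _ : Fin n => {v : Fin k → ZMod 2 | v j = 0}) := by
      ext A; simp [Set.mem_pi]
    rw [matrixMeasure, hset, Measure.pi_pi]
    rw [Finset.prod_congr rfl (fun i _ => hrow j), Finset.prod_const, Finset.card_univ,
      Fintype.card_fin, ← ENNReal.ofReal_pow h01]
  refine ⟨part1, ?_⟩
  intro f
  set ν := (PMF.uniformOfFintype (Fin k → ZMod 2)).toMeasure with hν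
  have hj0 : (0:ℕ) < k := by omega
  set j0 : Fin k := ⟨0, hj0⟩ with hj0def
  set T : Set ((Fin n → Fin k → ZMod 2) × (Fin k → ZMod 2)) :=
    {p | f p.1 (fun i => ∑ j, p.1 i j * p.2 j) ≠ p.2} with hTdef
  have hT : MeasurableSet T := (Set.toFinite T).measurableSet
  set E : Set (Fin n → Fin k → ZMod 2) := {A | ∀ i, A i j0 = 0} with hEdef
  have hE : MeasurableSet E := (Set.toFinite E).measurableSet
  have key : ∀ A ∈ E,
      (2:ℝ≥0∞)⁻¹ ≤ ν {x : Fin k → ZMod 2 | f A (fun i => ∑ t, A i t * x t) ≠ x} := by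
    intro A hA
    have hAi : ∀ i, A i j0 = 0 := hA
    set S : Set (Fin k → ZMod 2) := {x | f A (fun i => ∑ t, A i t * x t) ≠ x} with hSdef
    have hSm : MeasurableSet S := (Set.toFinite S).measurableSet
    rw [hν, PMF.toMeasure_apply_fintype]
    set e : Fin k → ZMod 2 := fun t => if t = j0 then 1 else 0 with he
    have hAe : ∀ x : Fin k → ZMod 2,
        (fun i => ∑ t, A i t * (x t + e t)) = (fun i => ∑ t, A i t * x t) := by
      intro x; funext i
      simp only [mul_add, Finset.sum_add_distrib]
      simp [he, mul_ite, mul_one, mul_zero, Finset.sum_ite_eq', hAi i]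
    have hxe : ∀ x : Fin k → ZMod 2, x + e ≠ x := by
      intro x hcon
      have h2 := congrFun hcon j0
      simp only [he, Pi.add_apply, if_pos rfl] at h2
      revert h2
      generalize x j0 = a
      revert a; decide
    have hinj : (univ.filter (fun x : Fin k → ZMod 2 => ¬ (x ∈ S))).card
        ≤ (univ.filter (fun x : Fin k → ZMod 2 => x ∈ S)).card := by
      apply Finset.card_le_card_of_injOn (fun x => x + e)
      · intro x hx
        simp only [mem_coe, mem_filter, mem_univ, true_and, hSdef, Set.mem_setOf_eq, not_not] at hx ⊢
        simp only [Pi.add_apply]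
        rw [hAe x, hx]
        exact fun hcon => hxe x hcon.symm
      · intro a _ b _ hab
        exact add_left_injective e hab
    have hsplit : (univ.filter (fun x : Fin k → ZMod 2 => x ∈ S)).card
        + (univ.filter (fun x : Fin k → ZMod 2 => ¬ (x ∈ S))).card = 2^k := by
      rw [Finset.card_filter_add_card_filter_not, Finset.card_univ]
      simp [ZMod.card]
    have h2k : (2:ℕ)^k ≤ 2 * (univ.filter (fun x : Fin k → ZMod 2 => x ∈ S)).card := by omega
    have hcardA : Fintype.card (Fin k → ZMod 2) = 2^k := by simp [ZMod.card]
    have hind : ∀ x : Fin k → ZMod 2,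
        S.indicator (⇑(PMF.uniformOfFintype (Fin k → ZMod 2))) x
          = if x ∈ S then ((2:ℝ≥0∞)^k)⁻¹ else 0 := by
      intro x
      rw [Set.indicator_apply]
      split_ifs with h
      · rw [PMF.uniformOfFintype_apply, hcardA]; push_cast; ring_nf
      · rfl
    rw [Finset.sum_congr rfl (fun x _ => hind x), ← Finset.sum_filter, Finset.sum_const,
      nsmul_eq_mul]
    set c : ℕ := (univ.filter (fun x : Fin k → ZMod 2 => x ∈ S)).card with hc
    rw [← div_eq_mul_inv,
      ENNReal.le_div_iff_mul_le (Or.inl (by positivity)) (Or.inl (by simp))]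
    have hcast : ((2:ℝ≥0∞))^k ≤ 2 * (c:ℝ≥0∞) := by
      calc ((2:ℝ≥0∞))^k = ((2^k : ℕ) : ℝ≥0∞) := by push_cast; ring
        _ ≤ ((2 * c : ℕ) : ℝ≥0∞) := by exact_mod_cast Nat.cast_le.mpr h2k
        _ = 2 * (c:ℝ≥0∞) := by push_cast; ring
    calc (2:ℝ≥0∞)⁻¹ * 2^k ≤ 2⁻¹ * (2 * (c:ℝ≥0∞)) := mul_le_mul_right hcast _
      _ = (c:ℝ≥0∞) := by rw [← mul_assoc, ENNReal.inv_mul_cancel two_ne_zero ENNReal.ofNat_ne_top,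
            one_mul]
  rw [Measure.prod_apply hT]
  have hpoint : ∀ A, E.indicator (fun _ => (2:ℝ≥0∞)⁻¹) A ≤ ν (Prod.mk A ⁻¹' T) := by
    intro A
    by_cases hA : A ∈ E
    · rw [Set.indicator_of_mem hA]
      exact key A hA
    · rw [Set.indicator_of_notMem hA]
      exact zero_le
  calc ENNReal.ofReal ((1/2) * (1 - dbar/k)^n)
      = 2⁻¹ * ENNReal.ofReal ((1 - dbar/k)^n) := by
        rw [ENNReal.ofReal_mul (by norm_num)]
        congr 1
        rw [show (1:ℝ)/2 = (2:ℝ)⁻¹ by norm_num, ENNReal.ofReal_inv_of_pos (by norm_num)]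
        norm_num
    _ = 2⁻¹ * matrixMeasure k n Ω E := by rw [part1 j0]
    _ = ∫⁻ A, E.indicator (fun _ => (2:ℝ≥0∞)⁻¹) A ∂(matrixMeasure k n Ω) := by
        rw [lintegral_indicator hE, setLIntegral_const, mul_comm]
    _ ≤ ∫⁻ A, ν (Prod.mk A ⁻¹' T) ∂(matrixMeasure k n Ω) := lintegral_mono hpoint
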